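/- Let g : ℝ → ℝ be a bounded Lebesgue-measurable function and let M ⊆ ℝ be a set with nonempty interior. If ∫_ℝ g(t) φ(t − m) dt = 0 for every m ∈ M, where φ(t) = (2π)^{-1/2} exp(−t²/2) is the standard normal density, then g = 0 Lebesgue-almost everywhere. -/

import Mathlib

open MeasureTheory

/-- The standard normal density `φ(t) = (2π)^{-1/2} exp(-t²/2)`. -/
noncomputable def stdNormalPDF (t : ℝ) : ℝ :=
  (Real.sqrt (2 * Real.pi))⁻¹ * Real.exp (-t ^ 2 / 2)

private lemma exp_dom_aux (a t : ℝ) :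
    Real.exp (-(2⁻¹) * t ^ 2 + |t| * a) ≤ Real.exp (a ^ 2) * Real.exp (-(4⁻¹) * t ^ 2) := by
  rw [← Real.exp_add]
  apply Real.exp_le_exp.2
  nlinarith [sq_nonneg (|t| / 2 - a), sq_abs t]

/-- A compactly supported smooth real function, seen as a complex-valued Schwartz map. -/
private noncomputable def toComplexSchwartz (θ : ℝ → ℝ)
    (hθ : ContDiff ℝ ((⊤ : ℕ∞) : WithTop ℕ∞) θ)
    (hθc : HasCompactSupport θ) : SchwartzMap ℝ ℂ where
  toFun := fun x ↦ (θ x : ℂ)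
  smooth' := Complex.ofRealCLM.contDiff.comp hθ
  decay' := by
    intro k n
    have hcont : Continuous fun x : ℝ ↦ ‖x‖ ^ k * ‖iteratedFDeriv ℝ n θ x‖ :=
      (continuous_norm.pow k).mul (hθ.continuous_iteratedFDeriv (by exact_mod_cast le_top)).norm
    have hsupp : HasCompactSupport fun x : ℝ ↦ ‖x‖ ^ k * ‖iteratedFDeriv ℝ n θ x‖ :=
      ((hθc.iteratedFDeriv n).norm).mul_left
    obtain ⟨Cb, hCb⟩ := hcont.bounded_above_of_compact_support hsupp
    refine ⟨Cb, fun x ↦ ?_⟩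
    have heq : ‖iteratedFDeriv ℝ n (fun x ↦ (θ x : ℂ)) x‖ = ‖iteratedFDeriv ℝ n θ x‖ := by
      have := Complex.ofRealLI.norm_iteratedFDeriv_comp_left (f := θ) (hθ.contDiffAt (x := x))
        (i := n) (by exact_mod_cast le_top)
      simpa [Function.comp_def] using this
    rw [heq]
    calc ‖x‖ ^ k * ‖iteratedFDeriv ℝ n θ x‖
        ≤ ‖‖x‖ ^ k * ‖iteratedFDeriv ℝ n θ x‖‖ := le_abs_self _
      _ ≤ Cb := hCb x

@[simp] private lemma toComplexSchwartz_apply (θ : ℝ → ℝ)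
    (hθ : ContDiff ℝ ((⊤ : ℕ∞) : WithTop ℕ∞) θ) (hθc : HasCompactSupport θ) (x : ℝ) :
    toComplexSchwartz θ hθ hθc x = (θ x : ℂ) := rfl

/-- bounded completeness of the Gaussian location family.
If a bounded measurable `g` integrates to zero against every normal density
`φ(· − m)` with `m` ranging over a set with nonempty interior, then `g = 0`
Lebesgue-almost everywhere. -/
theorem gaussian_location_bounded_complete
    (g : ℝ → ℝ) (hgm : Measurable g) (hgb : ∃ C : ℝ, ∀ t, |g t| ≤ C)
    (M : Set ℝ) (hM : (interior M).Nonempty)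
    (hzero : ∀ m ∈ M, ∫ t : ℝ, g t * stdNormalPDF (t - m) = 0) :
    ∀ᵐ t : ℝ ∂volume, g t = 0 := by
  classical
  obtain ⟨C, hC⟩ := hgb
  set Cm : ℝ := max C 0 with hCm
  have hCm0 : 0 ≤ Cm := le_max_right _ _
  set h : ℝ → ℝ := fun t ↦ g t * Real.exp (-(2⁻¹) * t ^ 2) with hh
  have hexpcont : Continuous fun t : ℝ ↦ Real.exp (-(2⁻¹) * t ^ 2) := by
    fun_prop
  have hmeas : Measurable h := hgm.mul hexpcont.measurable
  have hbound : ∀ t, |h t| ≤ Cm * Real.exp (-(2⁻¹) * t ^ 2) := by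
    intro t
    rw [hh]
    simp only [abs_mul, Real.abs_exp]
    exact mul_le_mul_of_nonneg_right ((hC t).trans (le_max_left _ _)) (Real.exp_pos _).le
  have hInt : Integrable h := by
    refine Integrable.mono' ((integrable_exp_neg_mul_sq (by norm_num : (0:ℝ) < 2⁻¹)).const_mul Cm)
      hmeas.aestronglyMeasurable (ae_of_all _ fun t ↦ ?_)
    simpa [Real.norm_eq_abs] using hbound t
  set hc : ℝ → ℂ := fun t ↦ (h t : ℂ) with hhc
  have hIntc : Integrable hc := hInt.ofReal
  have hmc : Measurable hc := Complex.measurable_ofReal.comp hmeas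
  -- the entire function F
  set F : ℂ → ℂ := fun z ↦ ∫ t : ℝ, hc t * Complex.exp (t * z) with hF
  have normeq : ∀ (z : ℂ) (t : ℝ),
      ‖hc t * Complex.exp (t * z)‖ = |h t| * Real.exp (t * z.re) := by
    intro z t
    simp [hhc, norm_mul, Complex.norm_real, Complex.norm_exp,
      Complex.mul_re]
  have hre_bound : ∀ (R : ℝ) (z : ℂ), ‖z‖ ≤ R → ∀ t : ℝ, t * z.re ≤ |t| * (R + 1) := by
    intro R z hz t
    calc t * z.re ≤ |t * z.re| := le_abs_self _
      _ = |t| * |z.re| := abs_mul _ _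
      _ ≤ |t| * (R + 1) := by
          refine mul_le_mul_of_nonneg_left ?_ (abs_nonneg t)
          have := (Complex.abs_re_le_norm z)
          linarith
  have hFbound : ∀ (R : ℝ) (z : ℂ), ‖z‖ ≤ R → ∀ t : ℝ,
      ‖hc t * Complex.exp (t * z)‖ ≤ Cm * Real.exp ((R+1) ^ 2) * Real.exp (-(4⁻¹) * t ^ 2) := by
    intro R z hz t
    rw [normeq]
    calc |h t| * Real.exp (t * z.re)
        ≤ (Cm * Real.exp (-(2⁻¹) * t ^ 2)) * Real.exp (|t| * (R + 1)) := by
          apply mul_le_mul (hbound t) (Real.exp_le_exp.2 (hre_bound R z hz t))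
            (Real.exp_pos _).le
          positivity
      _ = Cm * Real.exp (-(2⁻¹) * t ^ 2 + |t| * (R + 1)) := by
          rw [mul_assoc, ← Real.exp_add]
      _ ≤ Cm * (Real.exp ((R+1) ^ 2) * Real.exp (-(4⁻¹) * t ^ 2)) :=
          mul_le_mul_of_nonneg_left (exp_dom_aux _ _) hCm0
      _ = Cm * Real.exp ((R+1) ^ 2) * Real.exp (-(4⁻¹) * t ^ 2) := by ring
  have hF'bound : ∀ (R : ℝ) (z : ℂ), ‖z‖ ≤ R → ∀ t : ℝ,
      ‖hc t * ((t : ℂ) * Complex.exp (t * z))‖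
        ≤ Cm * Real.exp ((R+2) ^ 2) * Real.exp (-(4⁻¹) * t ^ 2) := by
    intro R z hz t
    have : ‖hc t * ((t : ℂ) * Complex.exp (t * z))‖
        = |h t| * (|t| * Real.exp (t * z.re)) := by
      rw [show hc t * ((t : ℂ) * Complex.exp (t * z))
          = (t : ℂ) * (hc t * Complex.exp (t * z)) from by ring,
        norm_mul, normeq z t, Complex.norm_real, Real.norm_eq_abs]
      ring
    rw [this]
    have habs : |t| ≤ Real.exp |t| := by
      have := Real.add_one_le_exp |t|
      linarith
    calc |h t| * (|t| * Real.exp (t * z.re))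
        ≤ (Cm * Real.exp (-(2⁻¹) * t ^ 2)) * (Real.exp |t| * Real.exp (|t| * (R + 1))) := by
          apply mul_le_mul (hbound t) ?_ (by positivity) (by positivity)
          exact mul_le_mul habs (Real.exp_le_exp.2 (hre_bound R z hz t)) (Real.exp_pos _).le
            (Real.exp_pos _).le
      _ = Cm * Real.exp (-(2⁻¹) * t ^ 2 + |t| * (R + 2)) := by
          rw [← Real.exp_add, mul_assoc, ← Real.exp_add]
          ring_nf
      _ ≤ Cm * (Real.exp ((R+2) ^ 2) * Real.exp (-(4⁻¹) * t ^ 2)) :=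
          mul_le_mul_of_nonneg_left (exp_dom_aux _ _) hCm0
      _ = Cm * Real.exp ((R+2) ^ 2) * Real.exp (-(4⁻¹) * t ^ 2) := by ring
  have hmeasz : ∀ z : ℂ, AEStronglyMeasurable (fun t : ℝ ↦ hc t * Complex.exp (t * z)) volume := by
    intro z
    exact (hmc.mul ((Complex.continuous_ofReal.mul continuous_const).cexp.measurable)
      ).aestronglyMeasurable
  have hIntz : ∀ z : ℂ, Integrable (fun t : ℝ ↦ hc t * Complex.exp (t * z)) := by
    intro z
    refine Integrable.mono'
      (((integrable_exp_neg_mul_sq (by norm_num : (0:ℝ) < 4⁻¹)).const_mul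
        (Cm * Real.exp ((‖z‖+1) ^ 2)))) (hmeasz z) (ae_of_all _ fun t ↦ ?_)
    simpa [mul_assoc] using hFbound ‖z‖ z le_rfl t
  have hFderiv : ∀ z₀ : ℂ, DifferentiableAt ℂ F z₀ := by
    intro z₀
    have key := hasDerivAt_integral_of_dominated_loc_of_deriv_le
      (F := fun (z : ℂ) (t : ℝ) ↦ hc t * Complex.exp (t * z))
      (F' := fun (z : ℂ) (t : ℝ) ↦ hc t * ((t : ℂ) * Complex.exp (t * z)))
      (x₀ := z₀)
      (bound := fun t : ℝ ↦ Cm * Real.exp ((‖z₀‖ + 1 + 2) ^ 2) * Real.exp (-(4⁻¹) * t ^ 2))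
      (s := Metric.ball z₀ 1) (Metric.ball_mem_nhds z₀ one_pos)
      (Filter.Eventually.of_forall fun z ↦ hmeasz z)
      (hIntz z₀)
      ((hmc.mul ((Complex.measurable_ofReal.mul
        ((Complex.continuous_ofReal.mul continuous_const).cexp.measurable)))).aestronglyMeasurable)
      (ae_of_all _ fun t z hz ↦ ?_)
      ((integrable_exp_neg_mul_sq (by norm_num : (0:ℝ) < 4⁻¹)).const_mul _)
      (ae_of_all _ fun t z _ ↦ ?_)
    · exact key.2.differentiableAt
    · -- bound
      have hzn : ‖z‖ ≤ ‖z₀‖ + 1 := by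
        have := mem_ball_iff_norm.1 hz
        calc ‖z‖ = ‖z₀ + (z - z₀)‖ := by ring_nf
          _ ≤ ‖z₀‖ + ‖z - z₀‖ := norm_add_le _ _
          _ ≤ ‖z₀‖ + 1 := by linarith
      exact hF'bound (‖z₀‖ + 1) z hzn t
    · -- derivative
      have h1 : HasDerivAt (fun z : ℂ ↦ (t : ℂ) * z) (t : ℂ) z := by
        simpa using (hasDerivAt_id z).const_mul (t : ℂ)
      have h2 := (h1.cexp).const_mul (hc t)
      refine h2.congr_deriv ?_
      ring
  have hFdiffOn : DifferentiableOn ℂ F Set.univ :=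
    fun z _ ↦ (hFderiv z).differentiableWithinAt
  have hFanalytic : AnalyticOnNhd ℂ F Set.univ := hFdiffOn.analyticOnNhd isOpen_univ
  -- F vanishes on M
  have hFM : ∀ m ∈ M, F (m : ℂ) = 0 := by
    intro m hm
    have hc2 : (Real.sqrt (2 * Real.pi))⁻¹ * Real.exp (-(2⁻¹) * m ^ 2) ≠ 0 := by
      have : (0:ℝ) < Real.sqrt (2 * Real.pi) := Real.sqrt_pos.2 (by positivity)
      positivity
    have hrw : ∀ t : ℝ, g t * stdNormalPDF (t - m)
        = ((Real.sqrt (2 * Real.pi))⁻¹ * Real.exp (-(2⁻¹) * m ^ 2))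
          * (h t * Real.exp (t * m)) := by
      intro t
      unfold stdNormalPDF
      rw [hh]
      rw [show -(t - m) ^ 2 / 2 = (-(2⁻¹) * t ^ 2) + (t * m) + (-(2⁻¹) * m ^ 2) by ring,
        Real.exp_add, Real.exp_add]
      ring
    have h1 : ∫ t : ℝ, h t * Real.exp (t * m) = 0 := by
      have h2 := hzero m hm
      rw [show (fun t : ℝ ↦ g t * stdNormalPDF (t - m))
          = fun t : ℝ ↦ ((Real.sqrt (2 * Real.pi))⁻¹ * Real.exp (-(2⁻¹) * m ^ 2))
            * (h t * Real.exp (t * m)) from funext hrw] at h2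
      rw [integral_const_mul] at h2
      exact (mul_eq_zero.1 h2).resolve_left hc2
    have h3 : F (m : ℂ) = ((∫ t : ℝ, h t * Real.exp (t * m) : ℝ) : ℂ) := by
      have hcast : (∫ t : ℝ, ((h t * Real.exp (t * m) : ℝ) : ℂ))
          = ((∫ t : ℝ, h t * Real.exp (t * m) : ℝ) : ℂ) := integral_ofReal
      rw [← hcast]
      show (∫ t : ℝ, hc t * Complex.exp (t * (m : ℂ)))
          = ∫ t : ℝ, ((h t * Real.exp (t * m) : ℝ) : ℂ)
      refine integral_congr_ae (ae_of_all _ fun t ↦ ?_)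
      show (h t : ℂ) * Complex.exp (t * (m : ℂ)) = ((h t * Real.exp (t * m) : ℝ) : ℂ)
      push_cast [Complex.ofReal_exp]
      ring
    rw [h3, h1, Complex.ofReal_zero]
  -- identity theorem
  obtain ⟨x₀, hx₀⟩ := hM
  obtain ⟨ε, hε, hball⟩ := Metric.isOpen_iff.1 isOpen_interior x₀ hx₀
  have hfreq : ∃ᶠ z in nhdsWithin (x₀ : ℂ) {(x₀ : ℂ)}ᶜ, F z = 0 := by
    rw [Filter.frequently_iff]
    intro U hU
    obtain ⟨δ, hδ, hsub⟩ := Metric.mem_nhdsWithin_iff.1 hU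
    set r : ℝ := min δ ε / 2 with hr
    have hr0 : 0 < r := by positivity
    have hrδ : r < δ := by
      have : min δ ε ≤ δ := min_le_left _ _
      simp only [hr]; linarith
    have hrε : r < ε := by
      have : min δ ε ≤ ε := min_le_right _ _
      simp only [hr]; linarith
    have hdist : dist ((x₀ + r : ℝ) : ℂ) ((x₀ : ℝ) : ℂ) = r := by
      rw [Complex.isometry_ofReal.dist_eq, Real.dist_eq]
      simp [abs_of_pos hr0]
    refine ⟨((x₀ + r : ℝ) : ℂ), hsub ⟨?_, ?_⟩, ?_⟩
    · rw [Metric.mem_ball, hdist]; exact hrδ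
    · simp only [Set.mem_compl_iff, Set.mem_singleton_iff]
      intro hcontra
      have : (x₀ + r : ℝ) = x₀ := Complex.ofReal_injective hcontra
      linarith
    · apply hFM
      apply interior_subset
      apply hball
      rw [Metric.mem_ball, Real.dist_eq]
      simpa [abs_of_pos hr0] using hrε
  have hF0 : ∀ z : ℂ, F z = 0 := fun z ↦
    hFanalytic.eqOn_zero_of_preconnected_of_frequently_eq_zero isPreconnected_univ
      (Set.mem_univ (x₀ : ℂ)) hfreq (Set.mem_univ z)
  -- Fourier transform of hc vanishes
  have hFour : ∀ w : ℝ, FourierTransform.fourier hc w = 0 := by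
    intro w
    rw [Real.fourier_real_eq_integral_exp_smul]
    have h0 := hF0 (((-2 * Real.pi * w : ℝ) : ℂ) * Complex.I)
    rw [show F (((-2 * Real.pi * w : ℝ) : ℂ) * Complex.I)
        = ∫ t : ℝ, hc t * Complex.exp (t * (((-2 * Real.pi * w : ℝ) : ℂ) * Complex.I))
        from rfl] at h0
    rw [← h0]
    refine integral_congr_ae (ae_of_all _ fun t ↦ ?_)
    show Complex.exp (((-2 * Real.pi * t * w : ℝ) : ℂ) * Complex.I) • hc t
        = hc t * Complex.exp (t * (((-2 * Real.pi * w : ℝ) : ℂ) * Complex.I))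
    rw [smul_eq_mul, mul_comm]
    congr 1
    push_cast
    ring
  -- pairing with Schwartz functions
  have hSch : ∀ Θ : SchwartzMap ℝ ℂ, (∫ x : ℝ, Θ x * hc x) = 0 := by
    intro Θ
    set Φ := (SchwartzMap.fourierTransformCLE ℂ (SchwartzMap ℝ ℂ)).symm Θ with hΦdef
    have hΦ : FourierTransform.fourier ⇑Φ = ⇑Θ := by
      have h1 := (SchwartzMap.fourierTransformCLE ℂ (SchwartzMap ℝ ℂ)).apply_symm_apply Θ
      calc FourierTransform.fourier ⇑Φ
          = ⇑((SchwartzMap.fourierTransformCLE ℂ (SchwartzMap ℝ ℂ)) Φ) :=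
            rfl
        _ = ⇑Θ := by rw [h1]
    have hflip := VectorFourier.integral_fourierIntegral_smul_eq_flip
      (e := Real.fourierChar) (L := innerₗ ℝ) (μ := volume) (ν := volume)
      Real.continuous_fourierChar continuous_inner Φ.integrable hIntc
    have hLflip : (innerₗ ℝ).flip = innerₗ ℝ := by
      apply LinearMap.ext; intro x; apply LinearMap.ext; intro y
      exact real_inner_comm x y
    rw [hLflip] at hflip
    have hleft : (∫ ξ : ℝ, VectorFourier.fourierIntegral Real.fourierChar volume (innerₗ ℝ)
        (⇑Φ) ξ • hc ξ) = ∫ x : ℝ, Θ x * hc x := by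
      refine integral_congr_ae (ae_of_all _ fun ξ ↦ ?_)
      show VectorFourier.fourierIntegral Real.fourierChar volume (innerₗ ℝ) (⇑Φ) ξ • hc ξ
          = Θ ξ * hc ξ
      have h2 : FourierTransform.fourier (⇑Φ) ξ = Θ ξ := congrFun hΦ ξ
      rw [show VectorFourier.fourierIntegral Real.fourierChar volume (innerₗ ℝ) (⇑Φ) ξ
          = FourierTransform.fourier (⇑Φ) ξ from rfl, h2, smul_eq_mul]
    have hright : (∫ x : ℝ, Φ x • VectorFourier.fourierIntegral Real.fourierChar volume
        (innerₗ ℝ) hc x) = 0 := by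
      have : ∀ x : ℝ, Φ x • VectorFourier.fourierIntegral Real.fourierChar volume
          (innerₗ ℝ) hc x = 0 := by
        intro x
        have : VectorFourier.fourierIntegral Real.fourierChar volume (innerₗ ℝ) hc x
            = FourierTransform.fourier hc x := rfl
        rw [this, hFour x, smul_zero]
      simp only [this, integral_zero]
    rw [← hleft, hflip, hright]
  -- test against compactly supported smooth functions
  have hh0 : ∀ᵐ t : ℝ ∂volume, h t = 0 := by
    apply ae_eq_zero_of_integral_contDiff_smul_eq_zero hInt.locallyIntegrable
    intro θ hθ hθc
    have h0 := hSch (toComplexSchwartz θ hθ hθc)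
    have h1 : ((∫ x : ℝ, θ x * h x : ℝ) : ℂ) = 0 := by
      have hcast : (∫ x : ℝ, ((θ x * h x : ℝ) : ℂ))
          = ((∫ x : ℝ, θ x * h x : ℝ) : ℂ) := integral_ofReal
      rw [← hcast, ← h0]
      refine integral_congr_ae (ae_of_all _ fun x ↦ ?_)
      show ((θ x * h x : ℝ) : ℂ) = (toComplexSchwartz θ hθ hθc) x * hc x
      rw [toComplexSchwartz_apply]
      push_cast
      ring
    have h2 : (∫ x : ℝ, θ x * h x : ℝ) = 0 := by exact_mod_cast h1
    simpa [smul_eq_mul] using h2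
  filter_upwards [hh0] with t ht
  rw [hh] at ht
  rcases mul_eq_zero.1 ht with h1 | h2
  · exact h1
  · exact absurd h2 (Real.exp_pos _).ne'
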